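/- (Proximal point method, weakly monotone case.) Let η ∈ ℝⁿ be a positive vector and let F : ℝⁿ → ℝⁿ be continuously differentiable, Lipschitz with respect to ‖·‖_{∞,η⁻¹}, and satisfy μ_{∞,η⁻¹}(−DF(x)) ≤ 0 for all x ∈ ℝⁿ. Suppose Zero(F) ≠ ∅. Then for every α > 0, any sequence satisfying x_{k+1} + αF(x_{k+1}) = x_k for all k (from any initial point x_0) converges to some element of Zero(F). -/

import Mathlib

open Filter

/-- Diagonally weighted ℓ∞ norm: ‖x‖_{∞,η⁻¹} = max_i |x_i|/η_i. -/
noncomputable def wNorm {n : ℕ} (η x : Fin n → ℝ) : ℝ := ⨆ i, |x i| / η i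

/-- Diagonally weighted ℓ∞ logarithmic norm of a matrix. -/
noncomputable def logNorm {n : ℕ} (η : Fin n → ℝ) (A : Matrix (Fin n) (Fin n) ℝ) : ℝ :=
  ⨆ i, (A i i + ∑ j ∈ Finset.univ.erase i, (η j / η i) * |A i j|)

/-- Jacobian matrix of `F` at `x`: (DF(x))_{ij} = ∂F_i/∂x_j. -/
noncomputable def jac {n : ℕ} (F : (Fin n → ℝ) → (Fin n → ℝ)) (x : Fin n → ℝ) :
    Matrix (Fin n) (Fin n) ℝ :=
  fun i j => fderiv ℝ F x (Pi.single j 1) i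

section Aux

variable {n : ℕ} {η : Fin n → ℝ}

lemma wNorm_nonneg' (hη : ∀ i, 0 < η i) (v : Fin n → ℝ) : 0 ≤ wNorm η v :=
  Real.iSup_nonneg fun i => div_nonneg (abs_nonneg _) (hη i).le

lemma coord_le_wNorm' [Nonempty (Fin n)] (hη : ∀ i, 0 < η i) (v : Fin n → ℝ) (i : Fin n) :
    |v i| ≤ η i * wNorm η v := by
  have h : |v i| / η i ≤ wNorm η v :=
    le_ciSup (f := fun j => |v j| / η j) (Set.Finite.bddAbove (Set.finite_range _)) i
  calc |v i| = η i * (|v i| / η i) := by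
        rw [mul_div_assoc'] ; exact (mul_div_cancel_left₀ _ (ne_of_gt (hη i))).symm
  _ ≤ η i * wNorm η v := mul_le_mul_of_nonneg_left h (hη i).le

lemma exists_argmax' [Nonempty (Fin n)] (hη : ∀ i, 0 < η i) (v : Fin n → ℝ) :
    ∃ i, |v i| = η i * wNorm η v := by
  obtain ⟨i, hi⟩ := Finite.exists_max (fun i => |v i| / η i)
  refine ⟨i, ?_⟩
  have h : wNorm η v = |v i| / η i :=
    le_antisymm (ciSup_le hi)
      (le_ciSup (f := fun j => |v j| / η j) (Set.Finite.bddAbove (Set.finite_range _)) i)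
  rw [h, mul_div_assoc']
  exact (mul_div_cancel_left₀ _ (ne_of_gt (hη i))).symm

lemma wNorm_le' [Nonempty (Fin n)] (hη : ∀ i, 0 < η i) (v : Fin n → ℝ) {c : ℝ}
    (h : ∀ i, |v i| ≤ η i * c) : wNorm η v ≤ c :=
  ciSup_le fun i => (div_le_iff₀ (hη i)).2 (by rw [mul_comm]; exact h i)

end Aux

section Sign

variable {n : ℕ} {η : Fin n → ℝ} {F : (Fin n → ℝ) → (Fin n → ℝ)}

lemma row_bound (hη : ∀ i, 0 < η i) (hmono : ∀ x, logNorm η (-(jac F x)) ≤ 0)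
    (p : Fin n → ℝ) (i : Fin n) :
    ∑ j ∈ Finset.univ.erase i, η j * |jac F p i j| ≤ η i * jac F p i i := by
  have h1 : (-(jac F p)) i i
      + ∑ j ∈ Finset.univ.erase i, (η j / η i) * |(-(jac F p)) i j| ≤ 0 := by
    refine le_trans ?_ (hmono p)
    exact le_ciSup (f := fun i => (-(jac F p)) i i
      + ∑ j ∈ Finset.univ.erase i, (η j / η i) * |(-(jac F p)) i j|)
      (Set.Finite.bddAbove (Set.finite_range _)) i
  simp only [Matrix.neg_apply, abs_neg] at h1
  have h3 : ∑ j ∈ Finset.univ.erase i, (η j / η i) * |jac F p i j| ≤ jac F p i i := by linarith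
  calc ∑ j ∈ Finset.univ.erase i, η j * |jac F p i j|
      = η i * ∑ j ∈ Finset.univ.erase i, (η j / η i) * |jac F p i j| := by
        rw [Finset.mul_sum]
        refine Finset.sum_congr rfl fun j _ => ?_
        rw [← mul_assoc, mul_div_assoc', mul_div_cancel_left₀ _ (ne_of_gt (hη i))]
  _ ≤ η i * jac F p i i := mul_le_mul_of_nonneg_left h3 (hη i).le

lemma fderiv_apply_eq_sum (hF : ContDiff ℝ 1 F) (p y : Fin n → ℝ) (i : Fin n) :
    fderiv ℝ F p y i = ∑ j, y j * jac F p i j := by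
  have hy : y = ∑ j, y j • (Pi.single j 1 : Fin n → ℝ) := by
    funext k
    rw [Finset.sum_apply]
    simp [Pi.single_apply, Finset.sum_ite_eq', mul_comm]
  conv_lhs => rw [hy]
  rw [map_sum, Finset.sum_apply]
  refine Finset.sum_congr rfl fun j _ => ?_
  rw [map_smul]
  simp [jac]

lemma sign_aux [Nonempty (Fin n)] (hη : ∀ i, 0 < η i) (hF : ContDiff ℝ 1 F)
    (hmono : ∀ x, logNorm η (-(jac F x)) ≤ 0)
    (u v : Fin n → ℝ) (i : Fin n)
    (hpos : 0 < u i - v i) (hmax : |u i - v i| = η i * wNorm η (u - v)) :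
    0 ≤ F u i - F v i := by
  set w : Fin n → ℝ := u - v with hw
  set N : ℝ := wNorm η w with hN
  have hNnn : 0 ≤ N := wNorm_nonneg' hη w
  have hwi : w i = η i * N := by
    have h0 : w i = u i - v i := rfl
    rw [h0, ← abs_of_pos hpos]
    exact hmax
  have hkey : ∀ t : ℝ, 0 ≤ fderiv ℝ F (v + t • w) w i := by
    intro t
    set p := v + t • w with hp
    rw [fderiv_apply_eq_sum hF p w i]
    rw [← Finset.add_sum_erase _ _ (Finset.mem_univ i)]
    have hb : ∀ j ∈ Finset.univ.erase i,
        -(η j * |jac F p i j| * N) ≤ w j * jac F p i j := by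
      intro j _
      have h1 : |w j * jac F p i j| ≤ (η j * N) * |jac F p i j| := by
        rw [abs_mul]
        exact mul_le_mul_of_nonneg_right (by
          have := coord_le_wNorm' hη w j; rw [← hN] at this; exact this) (abs_nonneg _)
      have h2 := neg_abs_le (w j * jac F p i j)
      nlinarith
    have hsum := Finset.sum_le_sum hb
    have hsum2 : ∑ j ∈ Finset.univ.erase i, -(η j * |jac F p i j| * N)
        = -((∑ j ∈ Finset.univ.erase i, η j * |jac F p i j|) * N) := by
      rw [Finset.sum_neg_distrib, Finset.sum_mul]
    have h5 : (∑ j ∈ Finset.univ.erase i, η j * |jac F p i j|) * N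
        ≤ (η i * jac F p i i) * N :=
      mul_le_mul_of_nonneg_right (row_bound hη hmono p i) hNnn
    have h6 : w i * jac F p i i = (η i * N) * jac F p i i := by rw [hwi]
    nlinarith [hsum, hsum2, h5, h6]
  have hc : Continuous fun t : ℝ => v + t • w := by continuity
  have hderiv : ∀ t ∈ Set.uIcc (0:ℝ) 1,
      HasDerivAt (fun t => F (v + t • w) i) (fderiv ℝ F (v + t • w) w i) t := by
    intro t _
    have h1 : HasDerivAt (fun t : ℝ => v + t • w) w t := by
      simpa using ((hasDerivAt_id t).smul_const w).const_add v
    have h2 : HasDerivAt (fun t => F (v + t • w)) (fderiv ℝ F (v + t • w) w) t :=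
      (((hF.differentiable one_ne_zero) (v + t • w)).hasFDerivAt).comp_hasDerivAt t h1
    have h3 := (ContinuousLinearMap.proj (R := ℝ) (φ := fun _ : Fin n => ℝ)
      i).hasFDerivAt.comp_hasDerivAt t h2
    exact h3
  have hgcont : Continuous fun t : ℝ => fderiv ℝ F (v + t • w) w i :=
    (continuous_apply i).comp (((hF.continuous_fderiv one_ne_zero).comp hc).clm_apply continuous_const)
  have hint := intervalIntegral.integral_eq_sub_of_hasDerivAt hderiv
    (hgcont.intervalIntegrable 0 1)
  have e1 : v + (1:ℝ) • w = u := by funext k; simp [hw]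
  have e0 : v + (0:ℝ) • w = v := by simp
  rw [e1, e0] at hint
  rw [← hint]
  exact intervalIntegral.integral_nonneg (by norm_num) (fun t _ => hkey t)

end Sign

section Sign2

variable {n : ℕ} {η : Fin n → ℝ} {F : (Fin n → ℝ) → (Fin n → ℝ)}

lemma wNorm_neg' (η v : Fin n → ℝ) : wNorm η (v) = wNorm η (-v) := by
  unfold wNorm
  refine iSup_congr fun i => ?_
  rw [Pi.neg_apply, abs_neg]

lemma sign_lemma [Nonempty (Fin n)] (hη : ∀ i, 0 < η i) (hF : ContDiff ℝ 1 F)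
    (hmono : ∀ x, logNorm η (-(jac F x)) ≤ 0)
    (u v : Fin n → ℝ) (i : Fin n)
    (hmax : |u i - v i| = η i * wNorm η (u - v)) :
    0 ≤ (u i - v i) * (F u i - F v i) := by
  rcases lt_trichotomy (u i - v i) 0 with h | h | h
  · have hmax' : |v i - u i| = η i * wNorm η (v - u) := by
      rw [abs_sub_comm, hmax]
      congr 1
      rw [wNorm_neg' η (u - v)]
      congr 1
      funext k; simp
    have h2 := sign_aux hη hF hmono v u i (by linarith) hmax'
    nlinarith
  · rw [h, zero_mul]
  · exact mul_nonneg h.le (sign_aux hη hF hmono u v i h hmax)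

lemma nonexpansive [Nonempty (Fin n)] (hη : ∀ i, 0 < η i) (hF : ContDiff ℝ 1 F)
    (hmono : ∀ x, logNorm η (-(jac F x)) ≤ 0) {α : ℝ} (hα : 0 < α) (u v : Fin n → ℝ) :
    wNorm η (u - v) ≤ wNorm η ((u + α • F u) - (v + α • F v)) := by
  obtain ⟨i, hi⟩ := exists_argmax' hη (u - v)
  have hi' : |u i - v i| = η i * wNorm η (u - v) := hi
  have hs := sign_lemma hη hF hmono u v i hi'
  have habs : |u i - v i| ≤ |(u i - v i) + α * (F u i - F v i)| := by
    rcases abs_cases (u i - v i) with ⟨h1, h2⟩ | ⟨h1, h2⟩ <;>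
      rcases abs_cases ((u i - v i) + α * (F u i - F v i)) with ⟨h3, h4⟩ | ⟨h3, h4⟩ <;>
      nlinarith
  have h2 : |((u + α • F u) - (v + α • F v)) i|
      ≤ η i * wNorm η ((u + α • F u) - (v + α • F v)) :=
    coord_le_wNorm' hη _ i
  have hcoord : ((u + α • F u) - (v + α • F v)) i = (u i - v i) + α * (F u i - F v i) := by
    simp [Pi.add_apply, Pi.sub_apply, Pi.smul_apply, smul_eq_mul]
    ring
  rw [hcoord] at h2
  have hchain : η i * wNorm η (u - v) ≤ η i * wNorm η ((u + α • F u) - (v + α • F v)) := by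
    calc η i * wNorm η (u - v) = |u i - v i| := hi'.symm
    _ ≤ |(u i - v i) + α * (F u i - F v i)| := habs
    _ ≤ η i * wNorm η ((u + α • F u) - (v + α • F v)) := h2
  exact le_of_mul_le_mul_left hchain (hη i)

end Sign2

set_option maxHeartbeats 2000000 in
/-- Proximal point method: weakly monotone case. -/
theorem stmt_10 {n : ℕ} (η : Fin n → ℝ) (hη : ∀ i, 0 < η i)
    (F : (Fin n → ℝ) → (Fin n → ℝ)) (hF : ContDiff ℝ 1 F)
    (L : ℝ) (hL : ∀ x y, wNorm η (F x - F y) ≤ L * wNorm η (x - y))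
    (hmono : ∀ x, logNorm η (-(jac F x)) ≤ 0)
    (hzero : ∃ z : Fin n → ℝ, F z = 0)
    (α : ℝ) (hα : 0 < α)
    (x : ℕ → (Fin n → ℝ)) (hx : ∀ k, x (k + 1) + α • F (x (k + 1)) = x k) :
    ∃ xs : Fin n → ℝ, F xs = 0 ∧ Tendsto x atTop (nhds xs) := by
  classical
  rcases Nat.eq_zero_or_pos n with hn | hn
  · subst hn
    refine ⟨x 0, funext fun i => i.elim0, ?_⟩
    have hxx : x = fun _ => x 0 := funext fun k => funext fun i => i.elim0
    rw [hxx]; exact tendsto_const_nhds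
  haveI : Nonempty (Fin n) := ⟨⟨0, hn⟩⟩
  obtain ⟨z, hz⟩ := hzero
  -- one proximal step does not increase the distance to any zero
  have hstep : ∀ (p : Fin n → ℝ), F p = 0 → ∀ k,
      wNorm η (x (k + 1) - p) ≤ wNorm η (x k - p) := by
    intro p hp k
    have h := nonexpansive hη hF hmono hα (x (k + 1)) p
    rwa [hp, smul_zero, add_zero, hx k] at h
  have hanti : ∀ (p : Fin n → ℝ), F p = 0 →
      Antitone fun k => wNorm η (x k - p) := fun p hp =>
    antitone_nat_of_succ_le (fun k => hstep p hp k)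
  set R := wNorm η (x 0 - z) with hR
  have hbound : ∀ k i, |x k i - z i| ≤ η i * R := by
    intro k i
    have h1 : wNorm η (x k - z) ≤ R := hanti z hz (Nat.zero_le k)
    have h2 : |(x k - z) i| ≤ η i * wNorm η (x k - z) := coord_le_wNorm' hη _ i
    simp only [Pi.sub_apply] at h2
    exact h2.trans (mul_le_mul_of_nonneg_left h1 (hη i).le)
  -- compactness of orbit segments
  set K : Set (ℕ → Fin n → ℝ) :=
    Set.univ.pi fun _ => Set.univ.pi fun i => Set.Icc (z i - η i * R) (z i + η i * R) with hK
  have hKc : IsCompact K :=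
    isCompact_univ_pi fun _ => isCompact_univ_pi fun i => isCompact_Icc
  have hmem : ∀ j : ℕ, (fun m => x (j + m)) ∈ K := by
    intro j
    rw [hK, Set.mem_univ_pi]
    intro m
    rw [Set.mem_univ_pi]
    intro i
    have h := abs_le.1 (hbound (j + m) i)
    exact Set.mem_Icc.2 ⟨by linarith [h.1], by linarith [h.2]⟩
  obtain ⟨q, hqK, φ, hφ, hconv⟩ := hKc.isSeqCompact hmem
  have hq : ∀ m, Tendsto (fun j => x (φ j + m)) atTop (nhds (q m)) := by
    have h := tendsto_pi_nhds.1 hconv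
    intro m
    exact h m
  have hqi : ∀ m i, Tendsto (fun j => x (φ j + m) i) atTop (nhds (q m i)) :=
    fun m i => (tendsto_pi_nhds.1 (hq m)) i
  have hqbd : ∀ m i, |q m i - z i| ≤ η i * R := by
    intro m i
    rw [hK, Set.mem_univ_pi] at hqK
    have h := hqK m
    rw [Set.mem_univ_pi] at h
    have h2 := Set.mem_Icc.1 (h i)
    exact abs_le.2 ⟨by linarith [h2.1], by linarith [h2.2]⟩
  have hφtop : ∀ m : ℕ, Tendsto (fun j => φ j + m) atTop atTop :=
    fun m => tendsto_atTop_mono (fun j => Nat.le_add_right (φ j) m) hφ.tendsto_atTop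
  -- step sizes
  set S : ℕ → ℝ := fun k => wNorm η (x k - x (k + 1)) with hS
  have hSanti : Antitone S := by
    refine antitone_nat_of_succ_le fun k => ?_
    have h := nonexpansive hη hF hmono hα (x (k + 1)) (x (k + 1 + 1))
    rwa [hx k, hx (k + 1)] at h
  have hSnn : ∀ k, 0 ≤ S k := fun k => wNorm_nonneg' hη _
  have hsbdd : BddBelow (Set.range S) := ⟨0, by rintro _ ⟨k, rfl⟩; exact hSnn k⟩
  set s := ⨅ k, S k with hs
  have hsconv : Tendsto S atTop (nhds s) := tendsto_atTop_ciInf hSanti hsbdd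
  have hsnn : 0 ≤ s := le_ciInf hSnn
  have hSconv' : ∀ m, Tendsto (fun j => S (φ j + m)) atTop (nhds s) :=
    fun m => hsconv.comp (hφtop m)
  -- limit orbit
  have horbit : ∀ m, q (m + 1) + α • F (q (m + 1)) = q m := by
    intro m
    have h1 : Tendsto (fun j => x (φ j + (m + 1)) + α • F (x (φ j + (m + 1)))) atTop
        (nhds (q (m + 1) + α • F (q (m + 1)))) :=
      (hq (m + 1)).add (((hF.continuous.tendsto _).comp (hq (m + 1))).const_smul α)
    have h2 : (fun j => x (φ j + (m + 1)) + α • F (x (φ j + (m + 1)))) =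
        fun j => x (φ j + m) := funext fun j => hx (φ j + m)
    rw [h2] at h1
    exact tendsto_nhds_unique h1 (hq m)
  have hb1 : ∀ m i, |q m i - q (m + 1) i| ≤ η i * s := by
    intro m i
    have hle : ∀ j, |x (φ j + m) i - x (φ j + (m + 1)) i| ≤ η i * S (φ j + m) := by
      intro j
      have h2 : |(x (φ j + m) - x (φ j + m + 1)) i|
          ≤ η i * wNorm η (x (φ j + m) - x (φ j + m + 1)) := coord_le_wNorm' hη _ i
      simp only [Pi.sub_apply] at h2
      exact h2
    exact le_of_tendsto_of_tendsto' (((hqi m i).sub (hqi (m + 1) i)).abs)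
      ((hSconv' m).const_mul (η i)) hle
  have hb2 : ∀ m, ∃ i, |q m i - q (m + 1) i| = η i * s := by
    intro m
    have hav : ∀ j : ℕ, ∃ i, |(x (φ j + m) - x (φ j + (m + 1))) i|
        = η i * wNorm η (x (φ j + m) - x (φ j + (m + 1))) :=
      fun j => exists_argmax' hη _
    choose I hI using hav
    obtain ⟨i, hi⟩ := Finite.exists_infinite_fiber I
    refine ⟨i, ?_⟩
    have hfreq : ∃ᶠ j in atTop, I j = i := by
      rw [Nat.frequently_atTop_iff_infinite]
      exact Set.infinite_coe_iff.1 hi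
    have ht1 : Tendsto (fun j => |x (φ j + m) i - x (φ j + (m + 1)) i|) atTop
        (nhds (|q m i - q (m + 1) i|)) := ((hqi m i).sub (hqi (m + 1) i)).abs
    have ht2 : Tendsto (fun j => η i * S (φ j + m)) atTop (nhds (η i * s)) :=
      (hSconv' m).const_mul (η i)
    refine tendsto_nhds_unique_of_frequently_eq ht1 ht2 (hfreq.mono fun j hj => ?_)
    have h := hI j
    rw [hj] at h
    simp only [Pi.sub_apply] at h
    exact h
  -- the limit step size is zero
  have hs0 : s = 0 := by
    by_contra hne
    have hspos : 0 < s := lt_of_le_of_ne hsnn (Ne.symm hne)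
    have hNb : ∀ m, wNorm η (q m - q (m + 1)) = s := by
      intro m
      refine le_antisymm (wNorm_le' hη _ fun i => by
        simpa only [Pi.sub_apply] using hb1 m i) ?_
      obtain ⟨i, hi⟩ := hb2 m
      have h2 : |(q m - q (m + 1)) i| ≤ η i * wNorm η (q m - q (m + 1)) :=
        coord_le_wNorm' hη _ i
      simp only [Pi.sub_apply] at h2
      rw [hi] at h2
      exact le_of_mul_le_mul_left h2 (hη i)
    have hkey2 : ∀ m i, |q (m + 1) i - q (m + 2) i| = η i * s →
        q m i - q (m + 1) i = q (m + 1) i - q (m + 2) i := by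
      intro m i hi
      have hmax : |q (m + 1) i - q (m + 2) i| = η i * wNorm η (q (m + 1) - q (m + 2)) := by
        have hnb : wNorm η (q (m + 1) - q (m + 2)) = s := hNb (m + 1)
        rw [hnb]; exact hi
      have hsg := sign_lemma hη hF hmono (q (m + 1)) (q (m + 2)) i hmax
      have hF1 : α • F (q (m + 1)) = q m - q (m + 1) := eq_sub_of_add_eq' (horbit m)
      have hF2 : α • F (q (m + 2)) = q (m + 1) - q (m + 2) := eq_sub_of_add_eq' (horbit (m + 1))
      have hc1 : α * F (q (m + 1)) i = q m i - q (m + 1) i := by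
        have h := congrFun hF1 i
        simpa using h
      have hc2 : α * F (q (m + 2)) i = q (m + 1) i - q (m + 2) i := by
        have h := congrFun hF2 i
        simpa using h
      have hprod : 0 ≤ (q (m + 1) i - q (m + 2) i) *
          ((q m i - q (m + 1) i) - (q (m + 1) i - q (m + 2) i)) := by
        have e : (q (m + 1) i - q (m + 2) i) *
            ((q m i - q (m + 1) i) - (q (m + 1) i - q (m + 2) i)) =
            α * ((q (m + 1) i - q (m + 2) i) * (F (q (m + 1)) i - F (q (m + 2)) i)) := by
          rw [← hc1, ← hc2]; ring
        rw [e]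
        exact mul_nonneg hα.le hsg
      have ha := abs_le.1 (hb1 m i)
      have hηs : (0:ℝ) < η i * s := mul_pos (hη i) hspos
      rcases (abs_eq hηs.le).1 hi with hc | hc
      · have h1 : η i * s ≤ q m i - q (m + 1) i := by nlinarith
        linarith [ha.2]
      · have h1 : q m i - q (m + 1) i ≤ -(η i * s) := by nlinarith
        linarith [ha.1]
    set A : ℕ → Finset (Fin n) :=
      fun m => Finset.univ.filter (fun i => |q m i - q (m + 1) i| = η i * s) with hA
    have hAne : ∀ m, (A m).Nonempty := by
      intro m
      obtain ⟨i, hi⟩ := hb2 m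
      exact ⟨i, Finset.mem_filter.2 ⟨Finset.mem_univ i, hi⟩⟩
    have hAsub : ∀ m, A (m + 1) ⊆ A m := by
      intro m i hi
      rw [hA, Finset.mem_filter] at hi ⊢
      refine ⟨Finset.mem_univ i, ?_⟩
      have hi2 : |q (m + 1) i - q (m + 2) i| = η i * s := hi.2
      rw [hkey2 m i hi2]
      exact hi2
    have hAchain : ∀ d m, A (m + d) ⊆ A m := by
      intro d
      induction d with
      | zero => intro m; exact Finset.Subset.refl _
      | succ d ih =>
        intro m
        have h1 : A (m + (d + 1)) ⊆ A (m + d) := hAsub (m + d)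
        exact h1.trans (ih m)
    set c := sInf (Set.range fun m => (A m).card) with hc
    obtain ⟨M, hM⟩ : ∃ M, (A M).card = c := by
      have h := Nat.sInf_mem (Set.range_nonempty fun m => (A m).card)
      rw [← hc] at h
      exact h
    have hstab : ∀ m, M ≤ m → A m = A M := by
      intro m hm
      obtain ⟨d, rfl⟩ := Nat.exists_eq_add_of_le hm
      refine Finset.eq_of_subset_of_card_le (hAchain d M) ?_
      rw [hM]
      exact Nat.sInf_le ⟨M + d, rfl⟩
    obtain ⟨i₀, hi₀⟩ := hAne M
    have hi₀m : ∀ m, M ≤ m → i₀ ∈ A m := fun m hm => (hstab m hm).symm ▸ hi₀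
    have hval : ∀ m, M ≤ m → q m i₀ - q (m + 1) i₀ = q M i₀ - q (M + 1) i₀ := by
      intro m hm
      induction m, hm using Nat.le_induction with
      | base => rfl
      | succ m hm ih =>
        have h1 : i₀ ∈ A (m + 1) := hi₀m (m + 1) (by omega)
        rw [hA, Finset.mem_filter] at h1
        rw [← hkey2 m i₀ h1.2]
        exact ih
    have hδ : |q M i₀ - q (M + 1) i₀| = η i₀ * s := by
      have h := hi₀
      rw [hA, Finset.mem_filter] at h
      exact h.2
    have htel : ∀ d : ℕ, q M i₀ - q (M + d) i₀ = d * (q M i₀ - q (M + 1) i₀) := by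
      intro d
      induction d with
      | zero => simp
      | succ d ih =>
        have h1 : q (M + d) i₀ - q (M + d + 1) i₀ = q M i₀ - q (M + 1) i₀ :=
          hval (M + d) (Nat.le_add_right M d)
        have e : M + (d + 1) = M + d + 1 := by omega
        rw [e]
        push_cast
        have : q M i₀ - q (M + d + 1) i₀ =
            (q M i₀ - q (M + d) i₀) + (q (M + d) i₀ - q (M + d + 1) i₀) := by ring
        rw [this, ih, h1]
        ring
    obtain ⟨d, hd⟩ := exists_nat_gt ((2 * R) / s)
    have h2R : |q M i₀ - q (M + d) i₀| ≤ 2 * (η i₀ * R) := by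
      have h1 := abs_sub_le (q M i₀) (z i₀) (q (M + d) i₀)
      have b1 := hqbd M i₀
      have b2 := hqbd (M + d) i₀
      have b2' : |z i₀ - q (M + d) i₀| ≤ η i₀ * R := by
        rw [abs_sub_comm]; exact b2
      linarith
    have e1 : |q M i₀ - q (M + d) i₀| = d * (η i₀ * s) := by
      rw [htel d, abs_mul, Nat.abs_cast, hδ]
    have hds : 2 * R < d * s := (div_lt_iff₀ hspos).1 hd
    have h3 : η i₀ * (2 * R) < η i₀ * (d * s) :=
      mul_lt_mul_of_pos_left hds (hη i₀)
    rw [e1] at h2R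
    nlinarith
  -- build the limit point
  have hq01 : q 0 = q 1 := by
    funext i
    have h := hb1 0 i
    rw [hs0, mul_zero] at h
    have h2 := abs_eq_zero.1 (le_antisymm h (abs_nonneg _))
    linarith
  have hFq1 : F (q 1) = 0 := by
    have h1 : α • F (q 1) = q 0 - q 1 := eq_sub_of_add_eq' (horbit 0)
    rw [hq01, sub_self] at h1
    rcases smul_eq_zero.1 h1 with h | h
    · exact absurd h (ne_of_gt hα)
    · exact h
  refine ⟨q 1, hFq1, ?_⟩
  have hdanti : Antitone (fun k => wNorm η (x k - q 1)) := hanti (q 1) hFq1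
  have hdnn : ∀ k, 0 ≤ wNorm η (x k - q 1) := fun k => wNorm_nonneg' hη _
  have hdsub : Tendsto (fun j => wNorm η (x (φ j) - q 1)) atTop (nhds 0) := by
    have hb : ∀ j, wNorm η (x (φ j) - q 1) ≤ ∑ i, |x (φ j) i - q 1 i| * (η i)⁻¹ := by
      intro j
      refine ciSup_le fun i => ?_
      have h1 : |(x (φ j) - q 1) i| / η i = |x (φ j) i - q 1 i| * (η i)⁻¹ := by
        rw [div_eq_mul_inv]; simp only [Pi.sub_apply]
      rw [h1]
      exact Finset.single_le_sum (f := fun i => |x (φ j) i - q 1 i| * (η i)⁻¹)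
        (fun i _ => mul_nonneg (abs_nonneg _) (inv_nonneg.2 (hη i).le)) (Finset.mem_univ i)
    have hT : Tendsto (fun j => ∑ i, |x (φ j) i - q 1 i| * (η i)⁻¹) atTop (nhds 0) := by
      have h1 : ∀ i : Fin n, Tendsto (fun j => |x (φ j) i - q 1 i| * (η i)⁻¹) atTop (nhds 0) := by
        intro i
        have h2 : Tendsto (fun j => x (φ j + 0) i) atTop (nhds (q 0 i)) := hqi 0 i
        have h3 : Tendsto (fun j => x (φ j) i) atTop (nhds (q 1 i)) := by
          rw [← hq01]
          exact h2
        have h4 : Tendsto (fun j => |x (φ j) i - q 1 i|) atTop (nhds 0) := by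
          have h5 := (h3.sub (tendsto_const_nhds (x := q 1 i))).abs
          simpa using h5
        have h6 := h4.mul_const (η i)⁻¹
        simpa using h6
      have h7 := tendsto_finset_sum Finset.univ (fun i (_ : i ∈ Finset.univ) => h1 i)
      simpa using h7
    exact squeeze_zero (fun j => hdnn (φ j)) hb hT
  have hdbdd : BddBelow (Set.range fun k => wNorm η (x k - q 1)) :=
    ⟨0, by rintro _ ⟨k, rfl⟩; exact hdnn k⟩
  have hdconv : Tendsto (fun k => wNorm η (x k - q 1)) atTop
      (nhds (⨅ k, wNorm η (x k - q 1))) := tendsto_atTop_ciInf hdanti hdbdd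
  have hd0 : (⨅ k, wNorm η (x k - q 1)) = 0 :=
    tendsto_nhds_unique (hdconv.comp hφ.tendsto_atTop) hdsub
  rw [hd0] at hdconv
  rw [tendsto_pi_nhds]
  intro i
  rw [tendsto_iff_dist_tendsto_zero]
  simp only [Real.dist_eq]
  refine squeeze_zero (fun k => abs_nonneg _) (fun k => ?_) (by simpa using hdconv.const_mul (η i))
  have h2 : |(x k - q 1) i| ≤ η i * wNorm η (x k - q 1) := coord_le_wNorm' hη _ i
  simpa only [Pi.sub_apply] using h2
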